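/- Let x⃗, y⃗ ∈ ℝ³, T a 3×3 real matrix, and suppose the region R⊥ = {ê ∈ ℝ³ : |ê|=1, y⃗ᵗê = 0, (Tᵗx⃗)ᵗê = 0} is nonempty. Then min over all unit n̂ of S(n̂) ≤ h₂((1+√(|x⃗|²+t₀²))/2), where t₀² = max{êᵗTᵗTê : ê ∈ R⊥} and S(n̂) is the two-qubit conditional entropy (assuming the constraints |x⃗ ± T n̂| ≤ 1 ∓ y⃗ᵗn̂ hold so all wᵢ are probabilities, and |x⃗|² + t₀² ≤ 1). -/
import Mathlib


noncomputable section
open Matrix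

def dot3 (u v : Fin 3 → ℝ) : ℝ := ∑ i, u i * v i
def norm3 (v : Fin 3 → ℝ) : ℝ := Real.sqrt (dot3 v v)

/-- Binary Shannon entropy (base 2). -/
def h2 (x : ℝ) : ℝ := -(x * Real.logb 2 x) - (1 - x) * Real.logb 2 (1 - x)

/-- Shannon entropy of four probabilities. -/
def h4 (a b c d : ℝ) : ℝ :=
  -(a * Real.logb 2 a) - b * Real.logb 2 b - c * Real.logb 2 c - d * Real.logb 2 d

/-- The conditional entropy `S(n̂) = h₄(w⃗) - h₂(p₀)`. -/
def condEnt (x y : Fin 3 → ℝ) (T : Matrix (Fin 3) (Fin 3) ℝ) (n : Fin 3 → ℝ) : ℝ :=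
  let p0 := (1 + dot3 y n) / 2
  let p1 := (1 - dot3 y n) / 2
  h4 ((2 * p0 + norm3 (x + T.mulVec n)) / 4) ((2 * p0 - norm3 (x + T.mulVec n)) / 4)
     ((2 * p1 + norm3 (x - T.mulVec n)) / 4) ((2 * p1 - norm3 (x - T.mulVec n)) / 4)
    - h2 p0

lemma h2_eq_binEntropy (p : ℝ) : h2 p = Real.binEntropy p / Real.log 2 := by
  simp only [h2, Real.binEntropy, Real.logb, Real.log_inv]
  field_simp
  ring

lemma h2_le_one (p : ℝ) : h2 p ≤ 1 := by
  rw [h2_eq_binEntropy]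
  rw [div_le_one (Real.log_pos one_lt_two)]
  exact Real.binEntropy_le_log_two

lemma term_lb (w : ℝ) (h1 : -1 ≤ w) (hw : w ≤ 1) : -2 ≤ -(w * Real.logb 2 w) := by
  rcases lt_trichotomy w 0 with hneg | rfl | hpos
  · set u : ℝ := -w with hu
    have hu0 : 0 < u := by simp [hu]; linarith
    have hu1 : u ≤ 1 := by simp [hu]; linarith
    have hlog : Real.logb 2 w = Real.logb 2 u := by
      rw [hu, Real.logb, Real.logb, Real.log_neg_eq_log]
    have hlow : u - 1 ≤ u * Real.log u := by
      have := Real.log_le_sub_one_of_pos (inv_pos.2 hu0)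
      rw [Real.log_inv] at this
      have h' : u * (-Real.log u) ≤ u * (u⁻¹ - 1) := mul_le_mul_of_nonneg_left this hu0.le
      have huu : u * u⁻¹ = 1 := mul_inv_cancel₀ hu0.ne'
      nlinarith
    have hl2 : (0.6931471803 : ℝ) < Real.log 2 := Real.log_two_gt_d9
    have : -(w * Real.logb 2 w) = u * Real.log u / Real.log 2 := by
      rw [hlog, Real.logb, hu]; ring
    rw [this, le_div_iff₀ (by linarith)]
    nlinarith
  · simp
  · have : Real.logb 2 w ≤ 0 := Real.logb_nonpos one_lt_two hpos.le hw
    nlinarith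

lemma dot3_nonneg (v : Fin 3 → ℝ) : 0 ≤ dot3 v v :=
  Finset.sum_nonneg fun i _ => mul_self_nonneg _

lemma norm3_nonneg (v : Fin 3 → ℝ) : 0 ≤ norm3 v := Real.sqrt_nonneg _

lemma dot3_swap (T : Matrix (Fin 3) (Fin 3) ℝ) (u v : Fin 3 → ℝ) :
    dot3 u (T.mulVec v) = dot3 (Tᵀ.mulVec u) v := by
  simp [dot3, Matrix.mulVec, Matrix.transpose_apply, dotProduct, Fin.sum_univ_three]
  ring

lemma dot3_TT (T : Matrix (Fin 3) (Fin 3) ℝ) (v : Fin 3 → ℝ) :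
    dot3 v ((Tᵀ * T).mulVec v) = dot3 (T.mulVec v) (T.mulVec v) := by
  simp [dot3, Matrix.mulVec, Matrix.mul_apply, Matrix.transpose_apply, dotProduct,
    Fin.sum_univ_three]
  ring

lemma dot3_add_self (u v : Fin 3 → ℝ) :
    dot3 (u + v) (u + v) = dot3 u u + 2 * dot3 u v + dot3 v v := by
  simp [dot3, Fin.sum_univ_three]; ring

lemma dot3_sub_self (u v : Fin 3 → ℝ) :
    dot3 (u - v) (u - v) = dot3 u u - 2 * dot3 u v + dot3 v v := by
  simp [dot3, Fin.sum_univ_three]; ring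

/-- For r ∈ [0,1]: h4((1+r)/4,(1-r)/4,(1+r)/4,(1-r)/4) - 1 = h2((1+r)/2). -/
lemma h4_symmetric (r : ℝ) (hr0 : 0 ≤ r) (hr1 : r ≤ 1) :
    h4 ((1 + r) / 4) ((1 - r) / 4) ((1 + r) / 4) ((1 - r) / 4) - 1
      = h2 ((1 + r) / 2) := by
  have hl2 : Real.log 2 ≠ 0 := ne_of_gt (Real.log_pos one_lt_two)
  have h1r : (0:ℝ) < 1 + r := by linarith
  have hlog4 : Real.log 4 = 2 * Real.log 2 := by
    rw [show (4:ℝ) = 2 * 2 by norm_num, Real.log_mul two_ne_zero two_ne_zero]; ring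
  rcases eq_or_lt_of_le hr1 with rfl | hr1'
  · norm_num [h4, h2, Real.logb, Real.log_div, hlog4]
  · have h2r : (0:ℝ) < 1 - r := by linarith
    have e1 : Real.log ((1 + r) / 4) = Real.log (1 + r) - 2 * Real.log 2 := by
      rw [Real.log_div h1r.ne' (by norm_num), hlog4]
    have e2 : Real.log ((1 - r) / 4) = Real.log (1 - r) - 2 * Real.log 2 := by
      rw [Real.log_div h2r.ne' (by norm_num), hlog4]
    have e3 : Real.log ((1 + r) / 2) = Real.log (1 + r) - Real.log 2 := by
      rw [Real.log_div h1r.ne' two_ne_zero]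
    have e4 : (1:ℝ) - (1 + r) / 2 = (1 - r) / 2 := by ring
    have e5 : Real.log ((1 - r) / 2) = Real.log (1 - r) - Real.log 2 := by
      rw [Real.log_div h2r.ne' two_ne_zero]
    simp only [h4, h2, Real.logb, e1, e2, e3, e4, e5]
    field_simp
    ring

/-- Upper bound on the minimal conditional entropy:
`min_{n̂} S(n̂) ≤ h₂((1+√(|x⃗|²+t₀²))/2)` where `t₀² = max{êᵗTᵗTê : ê ∈ R⊥}` and
`R⊥` is the set of unit vectors orthogonal to both `y⃗` and `Tᵗx⃗`. -/
theorem condEnt_min_upper_bound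
    (x y : Fin 3 → ℝ) (T : Matrix (Fin 3) (Fin 3) ℝ) (t0sq : ℝ)
    (ht0 : IsGreatest {r : ℝ | ∃ e : Fin 3 → ℝ, dot3 e e = 1 ∧ dot3 y e = 0 ∧
        dot3 (Tᵀ.mulVec x) e = 0 ∧ r = dot3 e ((Tᵀ * T).mulVec e)} t0sq)
    (hw : ∀ n : Fin 3 → ℝ, dot3 n n = 1 →
        norm3 (x + T.mulVec n) ≤ 1 - dot3 y n ∧
        norm3 (x - T.mulVec n) ≤ 1 + dot3 y n)
    (hle : norm3 x ^ 2 + t0sq ≤ 1) :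
    sInf {s : ℝ | ∃ n : Fin 3 → ℝ, dot3 n n = 1 ∧ s = condEnt x y T n}
      ≤ h2 ((1 + Real.sqrt (norm3 x ^ 2 + t0sq)) / 2) := by
  obtain ⟨⟨e, he, hye, hTxe, hre⟩, _⟩ := ht0
  -- basic facts
  have hx2 : norm3 x ^ 2 = dot3 x x := Real.sq_sqrt (dot3_nonneg x)
  have ht0nn : 0 ≤ t0sq := by
    rw [hre, dot3_TT]; exact dot3_nonneg _
  have hxTe : dot3 x (T.mulVec e) = 0 := by rw [dot3_swap]; exact hTxe
  have hTeTe : dot3 (T.mulVec e) (T.mulVec e) = t0sq := by rw [hre, dot3_TT]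
  set r := Real.sqrt (norm3 x ^ 2 + t0sq) with hrdef
  have hr0 : 0 ≤ r := Real.sqrt_nonneg _
  have hr1 : r ≤ 1 := by
    have := Real.sqrt_le_sqrt (show norm3 x ^ 2 + t0sq ≤ 1 by linarith)
    rwa [Real.sqrt_one] at this
  have hnp : norm3 (x + T.mulVec e) = r := by
    rw [norm3, dot3_add_self, hxTe, hTeTe,
      show dot3 x x + 2 * 0 + t0sq = norm3 x ^ 2 + t0sq by rw [hx2]; ring]
  have hnm : norm3 (x - T.mulVec e) = r := by
    rw [norm3, dot3_sub_self, hxTe, hTeTe,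
      show dot3 x x - 2 * 0 + t0sq = norm3 x ^ 2 + t0sq by rw [hx2]; ring]
  -- value at e
  have hval : condEnt x y T e = h2 ((1 + r) / 2) := by
    rw [condEnt]
    simp only [hye, hnp, hnm]
    have h2half : h2 ((1 + 0) / 2) = 1 := by
      have hl : Real.logb 2 ((1:ℝ)/2) = -1 := by
        rw [one_div, Real.logb_inv, Real.logb_self_eq_one] <;> norm_num
      norm_num [h2, hl]
    rw [h2half]
    have : ∀ s : ℝ, (2 * ((1 + (0:ℝ)) / 2) + s) / 4 = (1 + s) / 4 := by intro s; ring
    rw [this, show ∀ s : ℝ, (2 * ((1 + (0:ℝ)) / 2) - s) / 4 = (1 - s) / 4 from fun s => by ring,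
      show ∀ s : ℝ, (2 * ((1 - (0:ℝ)) / 2) + s) / 4 = (1 + s) / 4 from fun s => by ring,
      show ∀ s : ℝ, (2 * ((1 - (0:ℝ)) / 2) - s) / 4 = (1 - s) / 4 from fun s => by ring]
    exact h4_symmetric r hr0 hr1
  -- membership and lower bound
  apply csInf_le
  · -- BddBelow
    refine ⟨-9, ?_⟩
    rintro s ⟨n, hn, rfl⟩
    obtain ⟨hwa, hwb⟩ := hw n hn
    have hna : 0 ≤ norm3 (x + T.mulVec n) := norm3_nonneg _
    have hnb : 0 ≤ norm3 (x - T.mulVec n) := norm3_nonneg _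
    have hy1 : -1 ≤ dot3 y n := by linarith
    have hy2 : dot3 y n ≤ 1 := by linarith
    simp only [condEnt]
    set p0 := (1 + dot3 y n) / 2 with hp0
    set p1 := (1 - dot3 y n) / 2 with hp1
    have hh2 : h2 p0 ≤ 1 := h2_le_one p0
    have t1 := term_lb ((2 * p0 + norm3 (x + T.mulVec n)) / 4) (by rw [hp0]; linarith)
      (by rw [hp0]; linarith)
    have t2 := term_lb ((2 * p0 - norm3 (x + T.mulVec n)) / 4) (by rw [hp0]; linarith)
      (by rw [hp0]; linarith)
    have t3 := term_lb ((2 * p1 + norm3 (x - T.mulVec n)) / 4) (by rw [hp1]; linarith)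
      (by rw [hp1]; linarith)
    have t4 := term_lb ((2 * p1 - norm3 (x - T.mulVec n)) / 4) (by rw [hp1]; linarith)
      (by rw [hp1]; linarith)
    rw [h4]
    linarith
  · exact ⟨e, he, hval.symm⟩
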